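/- Let ⟨Q,B⟩_F ≥ ξ·‖Q‖_F‖B‖_F with ξ ∈ (0,1], and let ΔB satisfy entrywise sign(ΔB_{ab}) = sign(B_{ab}) (or ΔB_{ab}=0 when B_{ab}=0) and |ΔB_{ab}| ≤ β|B_{ab}| for β ≥ 0. Then ⟨Q, B + ΔB⟩_F ≥ (1 − (β/2)(1/ξ − 1))·⟨Q, B⟩_F. -/

import Mathlib

open Matrix

noncomputable def frobNorm {N : ℕ} (A : Matrix (Fin N) (Fin N) ℝ) : ℝ :=
  Real.sqrt (∑ a, ∑ b, (A a b) ^ 2)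

theorem stmt_12 {N : ℕ} (Q B ΔB : Matrix (Fin N) (Fin N) ℝ) (ξ β : ℝ)
    (hξ : ξ ∈ Set.Ioc (0 : ℝ) 1) (hβ : 0 ≤ β)
    (halign : ξ * (frobNorm Q * frobNorm B) ≤ ∑ a, ∑ b, Q a b * B a b)
    (hsign : ∀ a b, 0 ≤ ΔB a b * B a b)
    (hmag : ∀ a b, |ΔB a b| ≤ β * |B a b|) :
    (1 - β / 2 * (1 / ξ - 1)) * (∑ a, ∑ b, Q a b * B a b) ≤
      ∑ a, ∑ b, Q a b * (B a b + ΔB a b) := by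
  obtain ⟨hξ0, hξ1⟩ := hξ
  set S := ∑ a, ∑ b, Q a b * B a b with hS
  -- pointwise key bound
  have hkey : ∀ a b, β * min (Q a b * B a b) 0 ≤ Q a b * ΔB a b := by
    intro a b
    rcases le_or_gt 0 (Q a b * B a b) with h | h
    · rw [min_eq_right h, mul_zero]
      rcases eq_or_ne (B a b) 0 with hb | hb
      · have h1 := hmag a b
        rw [hb] at h1
        simp only [abs_zero, mul_zero] at h1
        have : ΔB a b = 0 := abs_eq_zero.mp (le_antisymm h1 (abs_nonneg _))
        simp [this]
      · have h1 := hsign a b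
        have hb2 : 0 < B a b ^ 2 := by positivity
        nlinarith [mul_nonneg h h1]
    · rw [min_eq_left h.le]
      have habs : |Q a b * ΔB a b| ≤ β * |Q a b * B a b| := by
        rw [abs_mul, abs_mul]
        calc |Q a b| * |ΔB a b| ≤ |Q a b| * (β * |B a b|) :=
              mul_le_mul_of_nonneg_left (hmag a b) (abs_nonneg _)
          _ = β * (|Q a b| * |B a b|) := by ring
      have h2 := neg_abs_le (Q a b * ΔB a b)
      rw [abs_of_neg h] at habs
      linarith
  have hsum1 : ∑ a, ∑ b, β * min (Q a b * B a b) 0 ≤ ∑ a, ∑ b, Q a b * ΔB a b :=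
    Finset.sum_le_sum fun a _ => Finset.sum_le_sum fun b _ => hkey a b
  -- Cauchy–Schwarz
  set T := ∑ a, ∑ b, |Q a b * B a b| with hT
  have hCS : T ≤ frobNorm Q * frobNorm B := by
    have := Real.sum_mul_le_sqrt_mul_sqrt (Finset.univ : Finset (Fin N × Fin N))
      (fun p => |Q p.1 p.2|) (fun p => |B p.1 p.2|)
    simp only [sq_abs] at this
    calc T = ∑ p : Fin N × Fin N, |Q p.1 p.2| * |B p.1 p.2| := by
          simp [hT, Fintype.sum_prod_type, abs_mul]
      _ ≤ Real.sqrt (∑ p : Fin N × Fin N, Q p.1 p.2 ^ 2) *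
          Real.sqrt (∑ p : Fin N × Fin N, B p.1 p.2 ^ 2) := this
      _ = frobNorm Q * frobNorm B := by
          simp [frobNorm, Fintype.sum_prod_type]
  have hST : ξ * T ≤ S := by
    have h1 : ξ * T ≤ ξ * (frobNorm Q * frobNorm B) :=
      mul_le_mul_of_nonneg_left hCS hξ0.le
    linarith
  -- sum of mins
  have hmin : ∑ a, ∑ b, min (Q a b * B a b) 0 = (S - T) / 2 := by
    have : ∀ x : ℝ, min x 0 = (x - |x|) / 2 := by
      intro x
      rcases le_or_gt 0 x with h | h
      · rw [min_eq_right h, abs_of_nonneg h]; ring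
      · rw [min_eq_left h.le, abs_of_neg h]; ring
    simp only [this, ← Finset.sum_div]
    rw [hS, hT, ← Finset.sum_sub_distrib]
    congr 1
    exact Finset.sum_congr rfl fun a _ => Finset.sum_sub_distrib _ _
  have hsum2 : β * ((S - T) / 2) ≤ ∑ a, ∑ b, Q a b * ΔB a b := by
    calc β * ((S - T) / 2) = ∑ a, ∑ b, β * min (Q a b * B a b) 0 := by
          rw [← hmin]; simp [Finset.mul_sum]
      _ ≤ _ := hsum1
  have hexp : ∑ a, ∑ b, Q a b * (B a b + ΔB a b) = S + ∑ a, ∑ b, Q a b * ΔB a b := by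
    rw [hS, ← Finset.sum_add_distrib]
    apply Finset.sum_congr rfl
    intro a _
    rw [← Finset.sum_add_distrib]
    apply Finset.sum_congr rfl
    intro b _
    ring
  rw [hexp]
  have hβT : β * T ≤ β * (S / ξ) := by
    apply mul_le_mul_of_nonneg_left _ hβ
    rw [le_div_iff₀ hξ0]
    linarith
  have hid : β / 2 * (1 / ξ - 1) * S = (β * (S / ξ) - β * S) / 2 := by
    field_simp
  linarith [hsum2, hβT]
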